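/- Let K = ℚ(√d) with d a negative squarefree integer, let w be the number of roots of unity in K, and let m ∈ ℤ satisfy 2m ≢ 0 (mod w). Then for every positive integer n, the finite sum Σ_{α ∈ V, N(α) = n} (α/ᾱ)^m equals 0. -/

import Mathlib

open MeasureTheory

/-- √d as a complex number: positive real square root for d ≥ 0, and
    i·√|d| (positive imaginary part) for d < 0. -/
noncomputable def sqrtd (d : ℤ) : ℂ :=
  if 0 ≤ d then ((Real.sqrt d : ℝ) : ℂ) else Complex.I * ((Real.sqrt (-d) : ℝ) : ℂ)

/-- ω = √d if d ≡ 2,3 mod 4 and ω = (1+√d)/2 if d ≡ 1 mod 4. -/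
noncomputable def omg (d : ℤ) : ℂ :=
  if d % 4 = 1 then (1 + sqrtd d) / 2 else sqrtd d

/-- The conjugate ω̄ of ω. -/
noncomputable def omgBar (d : ℤ) : ℂ :=
  if d % 4 = 1 then (1 - sqrtd d) / 2 else -sqrtd d

/-- The element a + bω of O = ℤ ⊕ ℤω. -/
noncomputable def elt (d a b : ℤ) : ℂ := (a : ℂ) + (b : ℂ) * omg d

/-- The conjugate a + bω̄ of a + bω. -/
noncomputable def eltBar (d a b : ℤ) : ℂ := (a : ℂ) + (b : ℂ) * omgBar d

/-- The norm N(a + bω) = (a+bω)(a+bω̄) as a rational integer. -/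
def Nrm (d a b : ℤ) : ℤ :=
  if d % 4 = 1 then a ^ 2 + a * b + b ^ 2 * ((1 - d) / 4) else a ^ 2 - d * b ^ 2

/-- Membership in the ring of integers O = ℤ ⊕ ℤω. -/
def InO (d : ℤ) (z : ℂ) : Prop := ∃ a b : ℤ, z = elt d a b

/-- z is a unit of the ring O. -/
def IsUnitO (d : ℤ) (z : ℂ) : Prop := InO d z ∧ ∃ y : ℂ, InO d y ∧ z * y = 1

/-- z is a visible point: z = a + bω with gcd(a,b) = 1. -/
def Visible (d : ℤ) (z : ℂ) : Prop := ∃ a b : ℤ, Int.gcd a b = 1 ∧ z = elt d a b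

/-- γ ∼ γ' : there are a unit υ and positive integers m, n with υmγ' = nγ. -/
def Sim (d : ℤ) (γ γ' : ℂ) : Prop :=
  ∃ υ : ℂ, IsUnitO d υ ∧ ∃ m n : ℕ, 0 < m ∧ 0 < n ∧ υ * (m : ℂ) * γ' = (n : ℂ) * γ

/-- The set N of elements of K = ℚ(√d) of norm 1. -/
noncomputable def NormOne (d : ℤ) : Set ℂ :=
  {z | ∃ a b : ℚ, z = (a : ℂ) + (b : ℂ) * sqrtd d ∧ a ^ 2 - (d : ℚ) * b ^ 2 = 1}

/-- w, the number of roots of unity in the imaginary quadratic field ℚ(√d):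
    4 if d = −1, 6 if d = −3, and 2 otherwise. -/
def rootsOfUnityCount (d : ℤ) : ℕ := if d = -1 then 4 else if d = -3 then 6 else 2

section Aux

private lemma sum_zero_aux (F : Finset (ℤ × ℤ)) (g : ℤ × ℤ → ℂ)
    (σ τ : ℤ × ℤ → ℤ × ℤ)
    (hσ : ∀ p ∈ F, σ p ∈ F) (hτ : ∀ p ∈ F, τ p ∈ F)
    (hls : ∀ p ∈ F, τ (σ p) = p) (hrs : ∀ p ∈ F, σ (τ p) = p)
    (e : ℂ) (he : e ≠ 1) (hg : ∀ p ∈ F, g (σ p) = e * g p) :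
    ∑ p ∈ F, g p = 0 := by
  have h1 : ∑ p ∈ F, g p = e * ∑ p ∈ F, g p := by
    calc ∑ p ∈ F, g p = ∑ p ∈ F, g (σ p) :=
          Finset.sum_nbij' τ σ hτ hσ hrs hls (fun a ha => by rw [hrs a ha])
      _ = ∑ p ∈ F, e * g p := Finset.sum_congr rfl hg
      _ = e * ∑ p ∈ F, g p := by rw [Finset.mul_sum]
  have h2 : (1 - e) * ∑ p ∈ F, g p = 0 := by linear_combination h1
  rcases mul_eq_zero.mp h2 with h | h
  · exact absurd (by linear_combination -h) he
  · exact h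

private lemma gcd_sigma1 (a b : ℤ) (h : Int.gcd a b = 1) : Int.gcd (-b) a = 1 := by
  simpa [Int.gcd, Nat.gcd_comm] using h

private lemma gcd_sigma3 (a b : ℤ) (h : Int.gcd a b = 1) : Int.gcd (-b) (a + b) = 1 := by
  rw [← Int.isCoprime_iff_gcd_eq_one] at h ⊢
  have h2 := (h.symm.neg_left).add_mul_right_right (-1)
  rwa [show a + -1 * -b = a + b by ring] at h2

private lemma gcd_tau3 (a b : ℤ) (h : Int.gcd a b = 1) : Int.gcd (a + b) (-a) = 1 := by
  rw [← Int.isCoprime_iff_gcd_eq_one] at h ⊢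
  have h2 := (h.neg_left).add_mul_right_right (-1)
  rw [show b + -1 * -a = a + b by ring] at h2
  exact h2.symm

end Aux

/-- For K = ℚ(√d) imaginary quadratic and 2m ≢ 0 mod w, for every n ≥ 1 the
    finite sum of (α/ᾱ)^m over the visible points α of norm n vanishes. -/
theorem visible_sum_vanishes
    (d : ℤ) (hd : Squarefree d) (hdneg : d < 0)
    (m : ℤ) (hm : ¬ ((rootsOfUnityCount d : ℤ) ∣ 2 * m))
    (n : ℕ) (hn : 0 < n)
    (hfin : {p : ℤ × ℤ | Int.gcd p.1 p.2 = 1 ∧ Nrm d p.1 p.2 = (n : ℤ)}.Finite) :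
    ∑ p ∈ hfin.toFinset, (elt d p.1 p.2 / eltBar d p.1 p.2) ^ m = 0 := by
  by_cases hd1 : d = -1
  · subst hd1
    have hmo : Odd m := by
      rw [Int.odd_iff]
      by_contra h
      exact hm ⟨m / 2, by norm_num [rootsOfUnityCount]; omega⟩
    have homg : omg (-1) = Complex.I := by
      norm_num [omg, sqrtd]
    have homgB : omgBar (-1) = -Complex.I := by
      norm_num [omgBar, sqrtd]
    refine sum_zero_aux _ _ (fun p => (-p.2, p.1)) (fun p => (p.2, -p.1)) ?_ ?_ ?_ ?_ (-1)
      (by norm_num) ?_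
    · intro p hp
      rw [Set.Finite.mem_toFinset] at hp ⊢
      refine ⟨gcd_sigma1 _ _ hp.1, ?_⟩
      have := hp.2
      norm_num [Nrm] at this ⊢
      linarith
    · intro p hp
      rw [Set.Finite.mem_toFinset] at hp ⊢
      constructor
      · have := gcd_sigma1 _ _ (gcd_sigma1 _ _ (gcd_sigma1 _ _ hp.1))
        simpa using this
      · have := hp.2
        norm_num [Nrm] at this ⊢
        linarith
    · intro p _ ; simp
    · intro p _ ; simp
    · intro p _
      have h1 : elt (-1) (-p.2) (p.1) = Complex.I * elt (-1) p.1 p.2 := by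
        simp only [elt, homg]; push_cast
        linear_combination (-(p.2 : ℂ)) * Complex.I_sq
      have h2 : eltBar (-1) (-p.2) (p.1) = (-Complex.I) * eltBar (-1) p.1 p.2 := by
        simp only [eltBar, homgB]; push_cast
        linear_combination (-(p.2 : ℂ)) * Complex.I_sq
      rw [h1, h2, mul_div_mul_comm]
      have h3 : Complex.I / (-Complex.I) = -1 := by
        rw [div_neg, div_self Complex.I_ne_zero]
      rw [h3, mul_zpow, hmo.neg_one_zpow]
  by_cases hd3 : d = -3
  · subst hd3
    -- basic facts about s = sqrt(-3)
    set s : ℂ := sqrtd (-3) with hs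
    have hs2 : s ^ 2 = -3 := by
      rw [hs, sqrtd]
      norm_num [mul_pow, Complex.I_sq]
      rw [← Complex.ofReal_pow, Real.sq_sqrt (by norm_num : (3:ℝ) ≥ 0)]
      norm_num
    have homg : omg (-3) = (1 + s) / 2 := by
      rw [omg]; norm_num; exact hs.symm
    have homgB : omgBar (-3) = (1 - s) / 2 := by
      rw [omgBar]; norm_num; exact hs.symm
    have hsne : (1 - s) / 2 ≠ 0 := by
      intro h
      have hs1 : s = 1 := by linear_combination -2 * h
      rw [hs1] at hs2; norm_num at hs2
    set e0 : ℂ := (-1 + s) / 2 with he0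
    have hratio : (1 + s) / 2 / ((1 - s) / 2) = e0 := by
      rw [div_eq_iff hsne, he0]
      linear_combination (1/4 : ℂ) * hs2
    have hcube : e0 ^ (3:ℕ) = 1 := by
      rw [he0, div_pow, div_eq_one_iff_eq (by norm_num : ((2:ℂ))^3 ≠ 0)]
      linear_combination (s - 3) * hs2
    have he0ne : e0 ≠ 0 := by
      intro h
      have hs1 : s = 1 := by linear_combination 2 * h
      rw [hs1] at hs2; norm_num at hs2
    have h3m : ¬ ((3:ℤ) ∣ m) := by
      intro ⟨k, hk⟩
      exact hm ⟨k, by norm_num [rootsOfUnityCount]; omega⟩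
    have hepow : e0 ^ m = e0 ^ (m % 3) := by
      conv_lhs => rw [show m = 3 * (m / 3) + m % 3 by omega]
      rw [zpow_add₀ he0ne, zpow_mul, show (3:ℤ) = ((3:ℕ):ℤ) from rfl, zpow_natCast, hcube,
        one_zpow, one_mul]
    have hene : e0 ^ m ≠ 1 := by
      rw [hepow]
      have : m % 3 = 1 ∨ m % 3 = 2 := by omega
      rcases this with h | h
      · rw [h]
        intro hc
        simp only [zpow_one] at hc
        have hs3 : s = 3 := by linear_combination 2 * hc
        rw [hs3] at hs2; norm_num at hs2
      · rw [h]
        intro hc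
        have hc' : e0 ^ (2:ℕ) = 1 := by rw [← zpow_natCast]; exact_mod_cast hc
        rw [he0] at hc'
        have hs3 : s = -3 := by
          linear_combination (-2 : ℂ) * hc' + (1/2 : ℂ) * hs2
        rw [hs3] at hs2; norm_num at hs2
    refine sum_zero_aux _ _ (fun p => (-p.2, p.1 + p.2)) (fun p => (p.1 + p.2, -p.1)) ?_ ?_ ?_ ?_
      (e0 ^ m) hene ?_
    · intro p hp
      rw [Set.Finite.mem_toFinset] at hp ⊢
      refine ⟨gcd_sigma3 _ _ hp.1, ?_⟩
      have := hp.2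
      norm_num [Nrm] at this ⊢
      linear_combination this
    · intro p hp
      rw [Set.Finite.mem_toFinset] at hp ⊢
      refine ⟨gcd_tau3 _ _ hp.1, ?_⟩
      have := hp.2
      norm_num [Nrm] at this ⊢
      linear_combination this
    · intro p _ ; simp
    · intro p _ ; simp
    · intro p _
      have h1 : elt (-3) (-p.2) (p.1 + p.2) = (1 + s) / 2 * elt (-3) p.1 p.2 := by
        simp only [elt, homg]; push_cast
        linear_combination (-(p.2:ℂ) / 4) * hs2
      have h2 : eltBar (-3) (-p.2) (p.1 + p.2) = (1 - s) / 2 * eltBar (-3) p.1 p.2 := by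
        simp only [eltBar, homgB]; push_cast
        linear_combination (-(p.2:ℂ) / 4) * hs2
      rw [h1, h2, mul_div_mul_comm, hratio, mul_zpow]
  · exfalso
    apply hm
    simp only [rootsOfUnityCount, hd1, hd3, if_false]
    exact ⟨m, by push_cast; ring⟩
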